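/- Let m be a closed DBM of dimension 2n, let a,b ∈ {0,…,2n−1}, let d ∈ ℚ, and let m' = IncClose(m,a,b,d). Then m' is either closed or it is not consistent. -/

import Mathlib

namespace Octagon

/-- A DBM of dimension `2*n` with entries in `ℚ ∪ {+∞}`. -/
abbrev DBM (n : ℕ) : Type := Fin (2 * n) → Fin (2 * n) → WithTop ℚ

/-- `bar i = i + 1` if `i` is even, `i - 1` if `i` is odd. -/
def bar {n : ℕ} (i : Fin (2 * n)) : Fin (2 * n) :=
  if h : (i : ℕ) % 2 = 0 then ⟨(i : ℕ) + 1, by have := i.isLt; omega⟩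
  else ⟨(i : ℕ) - 1, by have := i.isLt; omega⟩

/-- A DBM is closed iff its diagonal is zero and it satisfies the triangle inequality. -/
def Closed {n : ℕ} (m : DBM n) : Prop :=
  (∀ i, m i i = 0) ∧ ∀ i j k, m i j ≤ m i k + m k j

/-- A DBM is consistent iff its diagonal entries are nonnegative. -/
def Consistent {n : ℕ} (m : DBM n) : Prop :=
  ∀ i, 0 ≤ m i i

/-- A DBM is coherent iff `m[i,j] = m[bar j, bar i]` for all `i, j`. -/
def Coherent {n : ℕ} (m : DBM n) : Prop :=
  ∀ i j, m i j = m (bar j) (bar i)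

/-- Incremental closure of `m` with the new constraint `x'_a - x'_b ≤ d`. -/
def IncClose {n : ℕ} (m : DBM n) (a b : Fin (2 * n)) (d : ℚ) : DBM n :=
  fun i j =>
    min (m i j) <|
    min (m i a + (d : WithTop ℚ) + m b j) <|
    min (m i (bar b) + (d : WithTop ℚ) + m (bar a) j) <|
    min (m i (bar b) + (d : WithTop ℚ) + m (bar a) a + (d : WithTop ℚ) + m b j)
        (m i a + (d : WithTop ℚ) + m b (bar b) + (d : WithTop ℚ) + m (bar a) j)

/-- Halving on `ℚ ∪ {+∞}`, mapping `+∞` to `+∞`. -/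
def halve : WithTop ℚ → WithTop ℚ := WithTop.map (fun x => x / 2)

/-- Strengthening of a DBM. -/
def Strengthen {n : ℕ} (m : DBM n) : DBM n :=
  fun i j => min (m i j) (halve (m i (bar i) + m (bar j) j))

private lemma min5_eq {α : Type*} [LinearOrder α] (x1 x2 x3 x4 x5 : α) :
    min x1 (min x2 (min x3 (min x4 x5))) = x1 ∨
    min x1 (min x2 (min x3 (min x4 x5))) = x2 ∨
    min x1 (min x2 (min x3 (min x4 x5))) = x3 ∨
    min x1 (min x2 (min x3 (min x4 x5))) = x4 ∨
    min x1 (min x2 (min x3 (min x4 x5))) = x5 := by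
  rcases min_cases x1 (min x2 (min x3 (min x4 x5))) with ⟨h,-⟩|⟨h,-⟩
  · exact Or.inl h
  rcases min_cases x2 (min x3 (min x4 x5)) with ⟨h2,-⟩|⟨h2,-⟩
  · exact Or.inr (Or.inl (h.trans h2))
  rcases min_cases x3 (min x4 x5) with ⟨h3,-⟩|⟨h3,-⟩
  · exact Or.inr (Or.inr (Or.inl ((h.trans h2).trans h3)))
  rcases min_cases x4 x5 with ⟨h4,-⟩|⟨h4,-⟩
  · exact Or.inr (Or.inr (Or.inr (Or.inl (((h.trans h2).trans h3).trans h4))))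
  · exact Or.inr (Or.inr (Or.inr (Or.inr (((h.trans h2).trans h3).trans h4))))

private lemma glue {x t muv muk mkv rhs : WithTop ℚ} (R : WithTop ℚ)
    (h1 : x ≤ t) (h2 : t = muv + R) (h3 : muv ≤ muk + mkv)
    (h4 : muk + mkv + R = rhs) : x ≤ rhs :=
  h1.trans (h2.trans_le ((add_le_add h3 (le_refl R)).trans (le_of_eq h4)))

/-- Theorem 1 (Correctness of IncClose): the result is closed or inconsistent. -/
theorem incClose_closed_or_not_consistent {n : ℕ} (m : DBM n) (hm : Closed m)
    (a b : Fin (2 * n)) (d : ℚ) (m' : DBM n) (hm' : m' = IncClose m a b d) :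
    Closed m' ∨ ¬ Consistent m' := by
  subst hm'
  by_cases h : Consistent (IncClose m a b d)
  · left
    -- nonnegativity facts from consistency
    have hA : (0 : WithTop ℚ) ≤ ↑d + m b a := by
      have h1 : IncClose m a b d a a ≤ m a a + ↑d + m b a := by
        simp only [IncClose]
        exact le_trans (min_le_right _ _) (min_le_left _ _)
      have h2 := le_trans (h a) h1
      rwa [hm.1 a, zero_add] at h2
    have hA' : (0 : WithTop ℚ) ≤ ↑d + m (bar a) (bar b) := by
      have h1 : IncClose m a b d (bar b) (bar b) ≤
          m (bar b) (bar b) + ↑d + m (bar a) (bar b) := by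
        simp only [IncClose]
        exact le_trans (min_le_right _ _) (le_trans (min_le_right _ _) (min_le_left _ _))
      have h2 := le_trans (h (bar b)) h1
      rwa [hm.1 (bar b), zero_add] at h2
    have hE : (0 : WithTop ℚ) ≤ ↑d + m (bar a) a + ↑d + m b (bar b) := by
      have h1 : IncClose m a b d (bar b) (bar b) ≤
          m (bar b) (bar b) + ↑d + m (bar a) a + ↑d + m b (bar b) := by
        simp only [IncClose]
        exact le_trans (min_le_right _ _) (le_trans (min_le_right _ _)
          (le_trans (min_le_right _ _) (min_le_left _ _)))
      have h2 := le_trans (h (bar b)) h1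
      rwa [hm.1 (bar b), zero_add] at h2
    constructor
    · intro i
      refine le_antisymm ?_ (h i)
      have h1 : IncClose m a b d i i ≤ m i i := by
        simp only [IncClose]; exact min_le_left _ _
      rw [hm.1 i] at h1
      exact h1
    · intro i j k
      simp only [IncClose]
      rcases min5_eq (m i k) (m i a + ↑d + m b k) (m i (bar b) + ↑d + m (bar a) k)
        (m i (bar b) + ↑d + m (bar a) a + ↑d + m b k)
        (m i a + ↑d + m b (bar b) + ↑d + m (bar a) k) with hik|hik|hik|hik|hik <;>
      rcases min5_eq (m k j) (m k a + ↑d + m b j) (m k (bar b) + ↑d + m (bar a) j)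
        (m k (bar b) + ↑d + m (bar a) a + ↑d + m b j)
        (m k a + ↑d + m b (bar b) + ↑d + m (bar a) j) with hkj|hkj|hkj|hkj|hkj <;>
      rw [hik, hkj]
      · -- case (0,0)
        exact le_trans (min_le_left _ _) (hm.2 i j k)
      · -- case (0,1)
        exact glue (R := (↑d + m b j : WithTop ℚ)) (le_trans (min_le_right _ _) (min_le_left _ _)) (by abel) (hm.2 i a k) (by abel)
      · -- case (0,2)
        exact glue (R := (↑d + m (bar a) j : WithTop ℚ)) (le_trans (min_le_right _ _) (le_trans (min_le_right _ _) (min_le_left _ _))) (by abel) (hm.2 i (bar b) k) (by abel)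
      · -- case (0,3)
        exact glue (R := (↑d + m (bar a) a + ↑d + m b j : WithTop ℚ)) (le_trans (min_le_right _ _) (le_trans (min_le_right _ _) (le_trans (min_le_right _ _) (min_le_left _ _)))) (by abel) (hm.2 i (bar b) k) (by abel)
      · -- case (0,4)
        exact glue (R := (↑d + m b (bar b) + ↑d + m (bar a) j : WithTop ℚ)) (le_trans (min_le_right _ _) (le_trans (min_le_right _ _) (le_trans (min_le_right _ _) (min_le_right _ _)))) (by abel) (hm.2 i a k) (by abel)
      · -- case (1,0)
        exact glue (R := (m i a + ↑d : WithTop ℚ)) (le_trans (min_le_right _ _) (min_le_left _ _)) (by abel) (hm.2 b j k) (by abel)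
      · -- case (1,1)
        exact glue (R := (m i a + ↑d + m b j + ↑d : WithTop ℚ)) (le_trans (le_trans (min_le_right _ _) (min_le_left _ _)) (le_add_of_nonneg_right hA)) (by abel) (hm.2 b a k) (by abel)
      · -- case (1,2)
        exact glue (R := (m i a + ↑d + ↑d + m (bar a) j : WithTop ℚ)) (le_trans (min_le_right _ _) (le_trans (min_le_right _ _) (le_trans (min_le_right _ _) (min_le_right _ _)))) (by abel) (hm.2 b (bar b) k) (by abel)
      · -- case (1,3)
        exact glue (R := (m i a + ↑d + m b j + ↑d + m (bar a) a + ↑d : WithTop ℚ)) (le_trans (le_trans (min_le_right _ _) (min_le_left _ _)) (le_add_of_nonneg_right hE)) (by abel) (hm.2 b (bar b) k) (by abel)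
      · -- case (1,4)
        exact glue (R := (m i a + ↑d + m b (bar b) + ↑d + m (bar a) j + ↑d : WithTop ℚ)) (le_trans (le_trans (min_le_right _ _) (le_trans (min_le_right _ _) (le_trans (min_le_right _ _) (min_le_right _ _)))) (le_add_of_nonneg_right hA)) (by abel) (hm.2 b a k) (by abel)
      · -- case (2,0)
        exact glue (R := (m i (bar b) + ↑d : WithTop ℚ)) (le_trans (min_le_right _ _) (le_trans (min_le_right _ _) (min_le_left _ _))) (by abel) (hm.2 (bar a) j k) (by abel)
      · -- case (2,1)
        exact glue (R := (m i (bar b) + ↑d + ↑d + m b j : WithTop ℚ)) (le_trans (min_le_right _ _) (le_trans (min_le_right _ _) (le_trans (min_le_right _ _) (min_le_left _ _)))) (by abel) (hm.2 (bar a) a k) (by abel)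
      · -- case (2,2)
        exact glue (R := (m i (bar b) + ↑d + m (bar a) j + ↑d : WithTop ℚ)) (le_trans (le_trans (min_le_right _ _) (le_trans (min_le_right _ _) (min_le_left _ _))) (le_add_of_nonneg_right hA')) (by abel) (hm.2 (bar a) (bar b) k) (by abel)
      · -- case (2,3)
        exact glue (R := (m i (bar b) + ↑d + m (bar a) a + ↑d + m b j + ↑d : WithTop ℚ)) (le_trans (le_trans (min_le_right _ _) (le_trans (min_le_right _ _) (le_trans (min_le_right _ _) (min_le_left _ _)))) (le_add_of_nonneg_right hA')) (by abel) (hm.2 (bar a) (bar b) k) (by abel)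
      · -- case (2,4)
        exact glue (R := (m i (bar b) + ↑d + m (bar a) j + ↑d + ↑d + m b (bar b) : WithTop ℚ)) (le_trans (le_trans (min_le_right _ _) (le_trans (min_le_right _ _) (min_le_left _ _))) (le_add_of_nonneg_right hE)) (by abel) (hm.2 (bar a) a k) (by abel)
      · -- case (3,0)
        exact glue (R := (m i (bar b) + ↑d + m (bar a) a + ↑d : WithTop ℚ)) (le_trans (min_le_right _ _) (le_trans (min_le_right _ _) (le_trans (min_le_right _ _) (min_le_left _ _)))) (by abel) (hm.2 b j k) (by abel)
      · -- case (3,1)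
        exact glue (R := (m i (bar b) + ↑d + m (bar a) a + ↑d + m b j + ↑d : WithTop ℚ)) (le_trans (le_trans (min_le_right _ _) (le_trans (min_le_right _ _) (le_trans (min_le_right _ _) (min_le_left _ _)))) (le_add_of_nonneg_right hA)) (by abel) (hm.2 b a k) (by abel)
      · -- case (3,2)
        exact glue (R := (m i (bar b) + ↑d + m (bar a) j + ↑d + m (bar a) a + ↑d : WithTop ℚ)) (le_trans (le_trans (min_le_right _ _) (le_trans (min_le_right _ _) (min_le_left _ _))) (le_add_of_nonneg_right hE)) (by abel) (hm.2 b (bar b) k) (by abel)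
      · -- case (3,3)
        exact glue (R := (m i (bar b) + ↑d + m (bar a) a + ↑d + m b j + ↑d + m (bar a) a + ↑d : WithTop ℚ)) (le_trans (le_trans (min_le_right _ _) (le_trans (min_le_right _ _) (le_trans (min_le_right _ _) (min_le_left _ _)))) (le_add_of_nonneg_right hE)) (by abel) (hm.2 b (bar b) k) (by abel)
      · -- case (3,4)
        exact glue (R := (m i (bar b) + ↑d + m (bar a) j + ↑d + ↑d + m (bar a) a + ↑d + m b (bar b) : WithTop ℚ)) (le_trans (le_trans (min_le_right _ _) (le_trans (min_le_right _ _) (min_le_left _ _))) (le_add_of_nonneg_right (add_nonneg hA hE))) (by abel) (hm.2 b a k) (by abel)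
      · -- case (4,0)
        exact glue (R := (m i a + ↑d + m b (bar b) + ↑d : WithTop ℚ)) (le_trans (min_le_right _ _) (le_trans (min_le_right _ _) (le_trans (min_le_right _ _) (min_le_right _ _)))) (by abel) (hm.2 (bar a) j k) (by abel)
      · -- case (4,1)
        exact glue (R := (m i a + ↑d + m b j + ↑d + ↑d + m b (bar b) : WithTop ℚ)) (le_trans (le_trans (min_le_right _ _) (min_le_left _ _)) (le_add_of_nonneg_right hE)) (by abel) (hm.2 (bar a) a k) (by abel)
      · -- case (4,2)
        exact glue (R := (m i a + ↑d + m b (bar b) + ↑d + m (bar a) j + ↑d : WithTop ℚ)) (le_trans (le_trans (min_le_right _ _) (le_trans (min_le_right _ _) (le_trans (min_le_right _ _) (min_le_right _ _)))) (le_add_of_nonneg_right hA')) (by abel) (hm.2 (bar a) (bar b) k) (by abel)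
      · -- case (4,3)
        exact glue (R := (m i a + ↑d + m b j + ↑d + ↑d + m (bar a) a + ↑d + m b (bar b) : WithTop ℚ)) (le_trans (le_trans (min_le_right _ _) (min_le_left _ _)) (le_add_of_nonneg_right (add_nonneg hA' hE))) (by abel) (hm.2 (bar a) (bar b) k) (by abel)
      · -- case (4,4)
        exact glue (R := (m i a + ↑d + m b (bar b) + ↑d + m (bar a) j + ↑d + ↑d + m b (bar b) : WithTop ℚ)) (le_trans (le_trans (min_le_right _ _) (le_trans (min_le_right _ _) (le_trans (min_le_right _ _) (min_le_right _ _)))) (le_add_of_nonneg_right hE)) (by abel) (hm.2 (bar a) a k) (by abel)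
  · right
    exact h

end Octagon
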